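/- Let k ≥ 1, let G be a minimally k-edge-connected finite simple graph on V with |V| ≥ 2, fix a root r ∈ V, and let n_k(G) denote the number of vertices of G of degree k. Then the number of snug vertices v for which there exist no snug vertex u and snug shores (T₁, T₂) for u and (S₁, S₂) for v with T₂ = S₁ is strictly less than 2·n_k(G). (Equivalently, since the chain graph is a vertex-disjoint union of directed paths and each maximal path has a unique starting vertex without incoming arc, the number of snug paths satisfies |𝓟^G_chain| < 2·n_k(G).) -/

import Mathlib

open Finset

variable {V : Type*} [Fintype V] [DecidableEq V]

/-- `Crosses S e`: exactly one endpoint of the edge/link `e` lies in `S`. -/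
def Crosses (S : Finset V) (e : Sym2 V) : Prop :=
  ∃ x y : V, e = s(x, y) ∧ x ∈ S ∧ y ∉ S

instance (S : Finset V) : DecidablePred (Crosses S) := fun e =>
  decidable_of_iff (∃ x y : V, e = s(x, y) ∧ x ∈ S ∧ y ∉ S) Iff.rfl

/-- The cut `δ(S)`: edges of `G` with exactly one endpoint in `S`. -/
def cutEdges (G : SimpleGraph V) [DecidableRel G.Adj] (S : Finset V) :
    Finset (Sym2 V) :=
  G.edgeFinset.filter fun e => Crosses S e

/-- `G` is `k`-edge-connected: every nonempty proper cut has at least `k` crossing edges. -/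
def EdgeConnected (G : SimpleGraph V) [DecidableRel G.Adj] (k : ℕ) : Prop :=
  ∀ S : Finset V, S.Nonempty → S ≠ Finset.univ → k ≤ (cutEdges G S).card

/-- `S` is a `k`-cut: a nonempty proper vertex set with exactly `k` crossing edges. -/
def IsCut (G : SimpleGraph V) [DecidableRel G.Adj] (k : ℕ) (S : Finset V) : Prop :=
  S.Nonempty ∧ S ≠ Finset.univ ∧ (cutEdges G S).card = k

/-- `(S₁, S₂)` are snug shores for `v` (with respect to the root `r`):
two `k`-cuts avoiding `r` with `v ∉ S₁` and `S₂ = S₁ ∪ {v}`. -/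
def SnugShores (G : SimpleGraph V) [DecidableRel G.Adj] (k : ℕ) (r v : V)
    (S₁ S₂ : Finset V) : Prop :=
  IsCut G k S₁ ∧ IsCut G k S₂ ∧ r ∉ S₁ ∧ r ∉ S₂ ∧ v ∉ S₁ ∧ S₂ = insert v S₁

/-- `v` is a snug vertex (with respect to the root `r`). -/
def Snug (G : SimpleGraph V) [DecidableRel G.Adj] (k : ℕ) (r v : V) : Prop :=
  v ≠ r ∧ k + 1 ≤ G.degree v ∧ ∃ S₁ S₂ : Finset V, SnugShores G k r v S₁ S₂

/-- A snug chain: snug vertices `u 0, …, u t` together with `k`-cuts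
`S 0, …, S (t+1)` such that `(S i, S (i+1))` are snug shores for `u i`. -/
def IsSnugChain (G : SimpleGraph V) [DecidableRel G.Adj] (k : ℕ) (r : V)
    (t : ℕ) (u : ℕ → V) (S : ℕ → Finset V) : Prop :=
  ∀ i ≤ t, Snug G k r (u i) ∧ SnugShores G k r (u i) (S i) (S (i + 1))

set_option linter.unusedSectionVars false
set_option linter.unusedVariables false

section AuxLemmas

lemma crosses_iff (S : Finset V) (x y : V) :
    Crosses S s(x, y) ↔ (x ∈ S ∧ y ∉ S) ∨ (y ∈ S ∧ x ∉ S) := by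
  constructor
  · rintro ⟨a, b, hab, ha, hb⟩
    rw [Sym2.eq_iff] at hab
    rcases hab with ⟨rfl, rfl⟩ | ⟨rfl, rfl⟩
    · exact Or.inl ⟨ha, hb⟩
    · exact Or.inr ⟨ha, hb⟩
  · rintro (⟨h1, h2⟩ | ⟨h1, h2⟩)
    · exact ⟨x, y, rfl, h1, h2⟩
    · exact ⟨y, x, Sym2.eq_swap.symm, h1, h2⟩

variable (G : SimpleGraph V) [DecidableRel G.Adj]

lemma cut_submod (A B : Finset V) :
    (cutEdges G (A ∩ B)).card + (cutEdges G (A ∪ B)).card ≤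
      (cutEdges G A).card + (cutEdges G B).card := by
  classical
  simp only [cutEdges, Finset.card_filter]
  rw [← Finset.sum_add_distrib, ← Finset.sum_add_distrib]
  apply Finset.sum_le_sum
  intro e he
  induction e using Sym2.ind with
  | _ x y =>
    by_cases hxA : x ∈ A <;> by_cases hxB : x ∈ B <;>
      by_cases hyA : y ∈ A <;> by_cases hyB : y ∈ B <;>
      simp [crosses_iff, hxA, hxB, hyA, hyB]

lemma cut_posimod (A B : Finset V) :
    (cutEdges G (A \ B)).card + (cutEdges G (B \ A)).card ≤
      (cutEdges G A).card + (cutEdges G B).card := by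
  classical
  simp only [cutEdges, Finset.card_filter]
  rw [← Finset.sum_add_distrib, ← Finset.sum_add_distrib]
  apply Finset.sum_le_sum
  intro e he
  induction e using Sym2.ind with
  | _ x y =>
    by_cases hxA : x ∈ A <;> by_cases hxB : x ∈ B <;>
      by_cases hyA : y ∈ A <;> by_cases hyB : y ∈ B <;>
      simp [crosses_iff, hxA, hxB, hyA, hyB]

lemma cut_compl (A : Finset V) : cutEdges G Aᶜ = cutEdges G A := by
  unfold cutEdges
  apply Finset.filter_congr
  intro e he
  induction e using Sym2.ind with
  | _ x y => simp only [crosses_iff, Finset.mem_compl]; tauto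

lemma cut_singleton (x : V) : (cutEdges G {x}).card = G.degree x := by
  rw [← SimpleGraph.card_incidenceFinset_eq_degree]
  congr 1
  ext e
  simp only [cutEdges, Finset.mem_filter, SimpleGraph.mem_incidenceFinset]
  induction e using Sym2.ind with
  | _ a b =>
    simp only [SimpleGraph.mem_edgeFinset, crosses_iff, Finset.mem_singleton,
      SimpleGraph.mk'_mem_incidenceSet_iff]
    constructor
    · rintro ⟨he, (⟨rfl, h2⟩ | ⟨rfl, h2⟩)⟩
      · exact ⟨(SimpleGraph.mem_edgeSet G).mp he, Or.inl rfl⟩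
      · exact ⟨(SimpleGraph.mem_edgeSet G).mp he, Or.inr rfl⟩
    · rintro ⟨hadj, (rfl | rfl)⟩
      · exact ⟨(SimpleGraph.mem_edgeSet G).mpr hadj, Or.inl ⟨rfl, fun h => hadj.ne h.symm⟩⟩
      · exact ⟨(SimpleGraph.mem_edgeSet G).mpr hadj, Or.inr ⟨rfl, fun h => hadj.ne h⟩⟩

variable {G} {k : ℕ}

lemma isCut_compl {A : Finset V} (h : IsCut G k A) : IsCut G k Aᶜ := by
  obtain ⟨h1, h2, h3⟩ := h
  refine ⟨?_, ?_, by rwa [cut_compl]⟩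
  · rw [Finset.nonempty_iff_ne_empty]
    intro hc
    exact h2 (by simpa [Finset.compl_eq_empty_iff] using hc)
  · simp only [ne_eq, Finset.compl_eq_univ_iff]
    exact Finset.nonempty_iff_ne_empty.mp h1

lemma proper_of_subset {A B : Finset V} (h : A ⊆ B) (hB : B ≠ Finset.univ) :
    A ≠ Finset.univ := fun hA => hB (Finset.univ_subset_iff.mp (hA ▸ h))

lemma notin_univ {r : V} {A : Finset V} (h : r ∉ A) : A ≠ Finset.univ := by
  intro hA; exact h (hA ▸ Finset.mem_univ r)

lemma uncross_inter_union (hG : EdgeConnected G k) {A B : Finset V}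
    (hA : IsCut G k A) (hB : IsCut G k B) (hne : (A ∩ B).Nonempty)
    (hpr : A ∪ B ≠ Finset.univ) : IsCut G k (A ∩ B) ∧ IsCut G k (A ∪ B) := by
  have hiu : A ∩ B ≠ Finset.univ := proper_of_subset Finset.inter_subset_union hpr
  have huN : (A ∪ B).Nonempty := hne.mono Finset.inter_subset_union
  have h1 := hG _ hne hiu
  have h2 := hG _ huN hpr
  have h3 := cut_submod G A B
  rw [hA.2.2, hB.2.2] at h3
  exact ⟨⟨hne, hiu, by omega⟩, ⟨huN, hpr, by omega⟩⟩

lemma uncross_sdiff (hG : EdgeConnected G k) {A B : Finset V}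
    (hA : IsCut G k A) (hB : IsCut G k B) (h1 : (A \ B).Nonempty)
    (h2 : (B \ A).Nonempty) : IsCut G k (A \ B) ∧ IsCut G k (B \ A) := by
  have p1 : A \ B ≠ Finset.univ := by
    intro h; obtain ⟨b, hb⟩ := hB.1
    have : b ∈ A \ B := h ▸ Finset.mem_univ b
    exact (Finset.mem_sdiff.mp this).2 hb
  have p2 : B \ A ≠ Finset.univ := by
    intro h; obtain ⟨a, ha⟩ := hA.1
    have : a ∈ B \ A := h ▸ Finset.mem_univ a
    exact (Finset.mem_sdiff.mp this).2 ha
  have g1 := hG _ h1 p1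
  have g2 := hG _ h2 p2
  have h3 := cut_posimod G A B
  rw [hA.2.2, hB.2.2] at h3
  exact ⟨⟨h1, p1, by omega⟩, ⟨h2, p2, by omega⟩⟩

lemma singleton_ne_univ (hV : 2 ≤ Fintype.card V) (x : V) :
    ({x} : Finset V) ≠ Finset.univ := by
  intro h
  have := Finset.card_univ (α := V)
  rw [← h, Finset.card_singleton] at this
  omega

lemma degree_ge (hG : EdgeConnected G k) (hV : 2 ≤ Fintype.card V) (x : V) :
    k ≤ G.degree x := by
  rw [← cut_singleton G x]
  exact hG _ (Finset.singleton_nonempty x) (singleton_ne_univ hV x)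

/-- If `A` has no internal edge and `x ∈ A`, every edge at `x` crosses `A`. -/
lemma cut_singleton_subset {A : Finset V} (hno : ∀ x ∈ A, ∀ y ∈ A, ¬ G.Adj x y)
    {x : V} (hx : x ∈ A) : cutEdges G {x} ⊆ cutEdges G A := by
  intro e he
  simp only [cutEdges, Finset.mem_filter] at he ⊢
  obtain ⟨he1, he2⟩ := he
  refine ⟨he1, ?_⟩
  induction e using Sym2.ind with
  | _ a b =>
    have hadj : G.Adj a b := (SimpleGraph.mem_edgeSet G).mp
      (SimpleGraph.mem_edgeFinset.mp he1)
    rw [crosses_iff] at he2 ⊢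
    rcases he2 with ⟨h1, _⟩ | ⟨h1, _⟩ <;> simp only [Finset.mem_singleton] at h1
    · subst h1
      have hb : b ∉ A := fun hb => hno a hx b hb hadj
      exact Or.inl ⟨hx, hb⟩
    · subst h1
      have ha : a ∉ A := fun ha => hno b hx a ha hadj.symm
      exact Or.inr ⟨hx, ha⟩

lemma cut_singleton_disjoint {x₁ x₂ : V} (h : ¬ G.Adj x₁ x₂) (hne : x₁ ≠ x₂) :
    Disjoint (cutEdges G {x₁}) (cutEdges G {x₂}) := by
  rw [Finset.disjoint_left]
  intro e he1 he2
  simp only [cutEdges, Finset.mem_filter] at he1 he2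
  obtain ⟨hef, hc1⟩ := he1
  obtain ⟨-, hc2⟩ := he2
  induction e using Sym2.ind with
  | _ a b =>
    have hadj : G.Adj a b := (SimpleGraph.mem_edgeSet G).mp
      (SimpleGraph.mem_edgeFinset.mp hef)
    rw [crosses_iff] at hc1 hc2
    simp only [Finset.mem_singleton] at hc1 hc2
    have h1 : a = x₁ ∨ b = x₁ := by tauto
    have h2 : a = x₂ ∨ b = x₂ := by tauto
    rcases h1 with rfl | rfl <;> rcases h2 with rfl | rfl
    · exact hne rfl
    · exact h hadj
    · exact h hadj.symm
    · exact hne rfl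

/-- Every two-element subset of a `k`-cut side contains an internal edge,
unless degrees are too big.  Key step: an internal edge exists. -/
lemma exists_internal_edge (hG : EdgeConnected G k) (hk : 1 ≤ k)
    (hV : 2 ≤ Fintype.card V) {A : Finset V} (hA : IsCut G k A)
    (hcard : 2 ≤ A.card) (hdeg : ∀ x ∈ A, k + 1 ≤ G.degree x) :
    ∃ x ∈ A, ∃ y ∈ A, G.Adj x y := by
  by_contra hno
  push_neg at hno
  obtain ⟨x₁, hx₁, x₂, hx₂, hne⟩ := Finset.one_lt_card.mp hcard
  have hd : Disjoint (cutEdges G {x₁}) (cutEdges G {x₂}) :=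
    cut_singleton_disjoint (hno x₁ hx₁ x₂ hx₂) hne
  have hsub : cutEdges G {x₁} ∪ cutEdges G {x₂} ⊆ cutEdges G A :=
    Finset.union_subset (cut_singleton_subset hno hx₁) (cut_singleton_subset hno hx₂)
  have := Finset.card_le_card hsub
  rw [Finset.card_union_of_disjoint hd, cut_singleton, cut_singleton, hA.2.2] at this
  have d1 := hdeg x₁ hx₁
  have d2 := hdeg x₂ hx₂
  omega

/-- Mader-type lemma: every `k`-cut side contains a vertex of degree `k`. -/
lemma exists_degree_k (hG : EdgeConnected G k) (hk : 1 ≤ k)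
    (hV : 2 ≤ Fintype.card V)
    (hmin : ∀ e ∈ G.edgeSet, ∃ S : Finset V, IsCut G k S ∧ Crosses S e) :
    ∀ A : Finset V, IsCut G k A → ∃ x ∈ A, G.degree x = k := by
  intro A
  induction A using Finset.strongInduction with
  | _ A ih =>
    intro hA
    by_cases hd : ∃ x ∈ A, G.degree x = k
    · exact hd
    push_neg at hd
    have hdeg : ∀ x ∈ A, k + 1 ≤ G.degree x := fun x hx => by
      have := degree_ge hG hV x; have := hd x hx; omega
    have hcard : 2 ≤ A.card := by
      rcases Nat.lt_or_ge A.card 2 with h | h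
      · exfalso
        have h1 : A.card = 1 := by
          have := Finset.card_pos.mpr hA.1; omega
        obtain ⟨x, hx⟩ := Finset.card_eq_one.mp h1
        subst hx
        have := hA.2.2
        rw [cut_singleton] at this
        have := hdeg x (Finset.mem_singleton_self x)
        omega
      · exact h
    obtain ⟨x, hx, y, hy, hadj⟩ := exists_internal_edge hG hk hV hA hcard hdeg
    obtain ⟨T, hT, hcr⟩ := hmin s(x, y) ((SimpleGraph.mem_edgeSet G).mpr hadj)
    rw [crosses_iff] at hcr
    -- get z ∈ T, z' ∉ T, both in A, using T or Tᶜ with A ∪ T' ≠ univ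
    obtain ⟨T', hT', ⟨z, hzA, hzT⟩, ⟨z', hz'A, hz'T⟩, hpu⟩ :
        ∃ T', IsCut G k T' ∧ (∃ z ∈ A, z ∈ T') ∧ (∃ z' ∈ A, z' ∉ T')
          ∧ A ∪ T' ≠ Finset.univ := by
      by_cases hu : A ∪ T = Finset.univ
      · refine ⟨Tᶜ, isCut_compl hT, ?_, ?_, ?_⟩
        · rcases hcr with ⟨h1, h2⟩ | ⟨h1, h2⟩
          · exact ⟨y, hy, by simpa using h2⟩
          · exact ⟨x, hx, by simpa using h2⟩
        · rcases hcr with ⟨h1, h2⟩ | ⟨h1, h2⟩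
          · exact ⟨x, hx, by simpa using h1⟩
          · exact ⟨y, hy, by simpa using h1⟩
        · intro hc
          apply hA.2.1
          apply Finset.eq_univ_of_forall
          intro a
          by_cases haT : a ∈ T
          · have : a ∈ A ∪ Tᶜ := hc ▸ Finset.mem_univ a
            rcases Finset.mem_union.mp this with h | h
            · exact h
            · exact absurd haT (by simpa using h)
          · have : a ∈ A ∪ T := hu ▸ Finset.mem_univ a
            rcases Finset.mem_union.mp this with h | h
            · exact h
            · exact absurd h haT
      · refine ⟨T, hT, ?_, ?_, hu⟩
        · rcases hcr with ⟨h1, _⟩ | ⟨h1, _⟩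
          · exact ⟨x, hx, h1⟩
          · exact ⟨y, hy, h1⟩
        · rcases hcr with ⟨_, h2⟩ | ⟨_, h2⟩
          · exact ⟨y, hy, h2⟩
          · exact ⟨x, hx, h2⟩
    have hint : (A ∩ T').Nonempty := ⟨z, Finset.mem_inter.mpr ⟨hzA, hzT⟩⟩
    have hcut := (uncross_inter_union hG hA hT' hint hpu).1
    have hss : A ∩ T' ⊂ A := by
      refine Finset.ssubset_iff_of_subset Finset.inter_subset_left |>.mpr
        ⟨z', hz'A, fun hc => hz'T (Finset.mem_inter.mp hc).2⟩
    obtain ⟨w, hw, hwk⟩ := ih _ hss hcut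
    exact ⟨w, Finset.inter_subset_left hw, hwk⟩

lemma cut_singleton_subset_union {A B : Finset V} (hBA : B ⊆ A)
    (hno : ∀ x ∈ A \ B, ∀ y ∈ A \ B, ¬ G.Adj x y) {x : V} (hx : x ∈ A \ B) :
    cutEdges G {x} ⊆ cutEdges G A ∪ cutEdges G B := by
  intro e he
  simp only [cutEdges, Finset.mem_filter, Finset.mem_union] at he ⊢
  obtain ⟨he1, he2⟩ := he
  induction e using Sym2.ind with
  | _ a b =>
    have hadj : G.Adj a b := (SimpleGraph.mem_edgeSet G).mp
      (SimpleGraph.mem_edgeFinset.mp he1)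
    have hxA : x ∈ A := (Finset.mem_sdiff.mp hx).1
    have hxB : x ∉ B := (Finset.mem_sdiff.mp hx).2
    rw [crosses_iff] at he2
    obtain ⟨y, hy, hsw⟩ : ∃ y, G.Adj x y ∧ (Crosses A s(x,y) ∨ Crosses B s(x,y)
        → Crosses A s(a,b) ∨ Crosses B s(a,b)) := by
      rcases he2 with ⟨h1, _⟩ | ⟨h1, _⟩ <;> simp only [Finset.mem_singleton] at h1
      · subst h1
        exact ⟨b, hadj, fun h => h.imp id id⟩
      · subst h1
        refine ⟨a, hadj.symm, fun h => h.imp ?_ ?_ ⟩ <;>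
          · intro hc
            rw [crosses_iff] at hc ⊢
            tauto
    have key : Crosses A s(a, b) ∨ Crosses B s(a, b) := by
      by_cases hyA : y ∈ A
      · by_cases hyB : y ∈ B
        · exact hsw (Or.inr ((crosses_iff _ _ _).mpr (Or.inr ⟨hyB, hxB⟩)))
        · exact absurd hy (hno x hx y (Finset.mem_sdiff.mpr ⟨hyA, hyB⟩))
      · exact hsw (Or.inl ((crosses_iff _ _ _).mpr (Or.inl ⟨hxA, hyA⟩)))
    rcases key with h | h
    · exact Or.inl ⟨he1, h⟩
    · exact Or.inr ⟨he1, h⟩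

/-- Claim H: between nested `k`-cuts `B ⊂ A` (with `r ∉ A`), the gap `A \ B`
contains a degree-`k` vertex, or some `w` with `A \ {w}` a `k`-cut. -/
lemma gap_lemma (hG : EdgeConnected G k) (hk : 1 ≤ k) (hV : 2 ≤ Fintype.card V)
    (hmin : ∀ e ∈ G.edgeSet, ∃ S : Finset V, IsCut G k S ∧ Crosses S e)
    {r : V} {A : Finset V} (hA : IsCut G k A) (hrA : r ∉ A) :
    ∀ n (B : Finset V), (A \ B).card = n → IsCut G k B → B ⊂ A →
      (∃ x ∈ A \ B, G.degree x = k) ∨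
      (∃ w ∈ A \ B, k + 1 ≤ G.degree w ∧ IsCut G k (A \ {w})) := by
  intro n
  induction n using Nat.strong_induction_on with
  | _ n ih =>
    intro B hcard hB hBA
    by_cases hd : ∃ x ∈ A \ B, G.degree x = k
    · exact Or.inl hd
    push_neg at hd
    have hdeg : ∀ x ∈ A \ B, k + 1 ≤ G.degree x := fun x hx => by
      have := degree_ge hG hV x; have := hd x hx; omega
    have hRne : (A \ B).Nonempty := by
      obtain ⟨a, ha, hb⟩ := Finset.exists_of_ssubset hBA
      exact ⟨a, Finset.mem_sdiff.mpr ⟨ha, hb⟩⟩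
    rcases Nat.lt_or_ge n 2 with hn | hn
    · -- base case : the gap is a single vertex
      have h1 : (A \ B).card = 1 := by
        have := Finset.card_pos.mpr hRne; omega
      obtain ⟨w, hw⟩ := Finset.card_eq_one.mp h1
      have hwmem : w ∈ A \ B := hw ▸ Finset.mem_singleton_self w
      have heq : A \ {w} = B := by
        ext a
        simp only [Finset.mem_sdiff, Finset.mem_singleton]
        constructor
        · rintro ⟨haA, haw⟩
          by_contra haB
          have : a ∈ A \ B := Finset.mem_sdiff.mpr ⟨haA, haB⟩
          rw [hw] at this
          exact haw (Finset.mem_singleton.mp this)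
        · intro haB
          refine ⟨hBA.1 haB, fun hc => ?_⟩
          subst hc
          exact (Finset.mem_sdiff.mp hwmem).2 haB
      exact Or.inr ⟨w, hwmem, hdeg w hwmem, heq ▸ hB⟩
    · -- inductive step: find an internal edge of the gap
      have hno : ∃ x ∈ A \ B, ∃ y ∈ A \ B, G.Adj x y := by
        by_contra hno
        push_neg at hno
        obtain ⟨x₁, hx₁, x₂, hx₂, hne⟩ := Finset.one_lt_card.mp
          (by omega : 1 < (A \ B).card)
        have hdisj : Disjoint (cutEdges G {x₁}) (cutEdges G {x₂}) :=
          cut_singleton_disjoint (hno x₁ hx₁ x₂ hx₂) hne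
        have hsub : cutEdges G {x₁} ∪ cutEdges G {x₂} ⊆
            cutEdges G A ∪ cutEdges G B :=
          Finset.union_subset (cut_singleton_subset_union hBA.1 hno hx₁)
            (cut_singleton_subset_union hBA.1 hno hx₂)
        have h1 := Finset.card_le_card hsub
        rw [Finset.card_union_of_disjoint hdisj, cut_singleton, cut_singleton] at h1
        have h2 := Finset.card_union_le (cutEdges G A) (cutEdges G B)
        rw [hA.2.2, hB.2.2] at h2
        have d1 := hdeg x₁ hx₁
        have d2 := hdeg x₂ hx₂
        omega
      obtain ⟨x, hx, y, hy, hadj⟩ := hno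
      obtain ⟨T, hT, hcr⟩ := hmin s(x, y) ((SimpleGraph.mem_edgeSet G).mpr hadj)
      rw [crosses_iff] at hcr
      -- replace T by its complement if it contains r
      obtain ⟨T', hT', hrT', z, z', hzT, hz'T, hzR, hz'R⟩ :
          ∃ T', IsCut G k T' ∧ r ∉ T' ∧ ∃ z z', z ∈ T' ∧ z' ∉ T' ∧
            z ∈ A \ B ∧ z' ∈ A \ B := by
        by_cases hrT : r ∈ T
        · refine ⟨Tᶜ, isCut_compl hT, by simpa using hrT, ?_⟩
          rcases hcr with ⟨h1, h2⟩ | ⟨h1, h2⟩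
          · exact ⟨y, x, by simpa using h2, by simpa using h1, hy, hx⟩
          · exact ⟨x, y, by simpa using h2, by simpa using h1, hx, hy⟩
        · refine ⟨T, hT, hrT, ?_⟩
          rcases hcr with ⟨h1, h2⟩ | ⟨h1, h2⟩
          · exact ⟨x, y, h1, h2, hx, hy⟩
          · exact ⟨y, x, h1, h2, hy, hx⟩
      have hzA : z ∈ A := (Finset.mem_sdiff.mp hzR).1
      have hz'A : z' ∈ A := (Finset.mem_sdiff.mp hz'R).1
      have hT₁ : IsCut G k (T' ∩ A) :=
        (uncross_inter_union hG hT' hA ⟨z, Finset.mem_inter.mpr ⟨hzT, hzA⟩⟩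
          (notin_univ (show r ∉ T' ∪ A by simp [hrT', hrA]))).1
      have hzT₁ : z ∈ T' ∩ A := Finset.mem_inter.mpr ⟨hzT, hzA⟩
      by_cases hTB : ((T' ∩ A) ∩ B).Nonempty
      · have hBT : IsCut G k (B ∪ (T' ∩ A)) := by
          refine (uncross_inter_union hG hB hT₁ ?_ ?_).2
          · rwa [Finset.inter_comm]
          · refine proper_of_subset (Finset.union_subset hBA.1
              Finset.inter_subset_right) hA.2.1
        by_cases hEq : B ∪ (T' ∩ A) = A
        · -- the difference T₁ \ B is a k-cut inside the gap
          have hBd : (B \ (T' ∩ A)).Nonempty := by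
            rw [Finset.sdiff_nonempty]
            intro hBsub
            have hz'' : z' ∈ B ∪ (T' ∩ A) := hEq.symm ▸ hz'A
            rcases Finset.mem_union.mp hz'' with h | h
            · exact hz'T (Finset.mem_inter.mp (hBsub h)).1
            · exact hz'T (Finset.mem_inter.mp h).1
          have hTd : ((T' ∩ A) \ B).Nonempty :=
            ⟨z, Finset.mem_sdiff.mpr ⟨hzT₁, (Finset.mem_sdiff.mp hzR).2⟩⟩
          have hQ : IsCut G k ((T' ∩ A) \ B) :=
            (uncross_sdiff hG hT₁ hB hTd hBd).1
          obtain ⟨q, hq, hqk⟩ := exists_degree_k hG hk hV hmin _ hQ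
          refine Or.inl ⟨q, ?_, hqk⟩
          obtain ⟨hq1, hq2⟩ := Finset.mem_sdiff.mp hq
          exact Finset.mem_sdiff.mpr ⟨(Finset.mem_inter.mp hq1).2, hq2⟩
        · -- strictly intermediate cut : recurse
          have hBB' : B ⊂ B ∪ (T' ∩ A) := by
            refine Finset.ssubset_iff_of_subset Finset.subset_union_left |>.mpr
              ⟨z, Finset.mem_union_right _ hzT₁, (Finset.mem_sdiff.mp hzR).2⟩
          have hB'A : B ∪ (T' ∩ A) ⊂ A :=
            lt_of_le_of_ne (Finset.union_subset hBA.1 Finset.inter_subset_right) hEq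
          have hlt : (A \ (B ∪ (T' ∩ A))).card < n := by
            rw [← hcard]
            apply Finset.card_lt_card
            refine Finset.ssubset_iff_of_subset
              (Finset.sdiff_subset_sdiff subset_rfl Finset.subset_union_left) |>.mpr
              ⟨z, Finset.mem_sdiff.mpr ⟨hzA, (Finset.mem_sdiff.mp hzR).2⟩, ?_⟩
            simp only [Finset.mem_sdiff, not_and, not_not]
            intro _
            exact Finset.mem_union_right _ hzT₁
          rcases ih _ hlt _ rfl hBT hB'A with ⟨q, hq, hqk⟩ | ⟨w, hw, hw1, hw2⟩
          · exact Or.inl ⟨q, Finset.sdiff_subset_sdiff subset_rfl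
              Finset.subset_union_left hq, hqk⟩
          · exact Or.inr ⟨w, Finset.sdiff_subset_sdiff subset_rfl
              Finset.subset_union_left hw, hw1, hw2⟩
      · -- T₁ avoids B : it is a k-cut inside the gap
        have hsub : T' ∩ A ⊆ A \ B := by
          intro a ha
          refine Finset.mem_sdiff.mpr ⟨(Finset.mem_inter.mp ha).2, fun hc => ?_⟩
          exact hTB ⟨a, Finset.mem_inter.mpr ⟨ha, hc⟩⟩
        obtain ⟨q, hq, hqk⟩ := exists_degree_k hG hk hV hmin _ hT₁
        exact Or.inl ⟨q, hsub hq, hqk⟩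

lemma lower_of_shores {k : ℕ} {r v : V} {S₁ S₂ : Finset V}
    (h : SnugShores G k r v S₁ S₂) : SnugShores G k r v S₁ (insert v S₁) := by
  obtain ⟨h1, h2, h3, h4, h5, h6⟩ := h
  exact ⟨h1, h6 ▸ h2, h3, h6 ▸ h4, h5, rfl⟩

variable {k : ℕ}

lemma nesting (hG : EdgeConnected G k) {r v v' : V} {S S' : Finset V}
    (hv : Snug G k r v)
    (hsh : SnugShores G k r v S (insert v S))
    (hminS : ∀ S₀, SnugShores G k r v S₀ (insert v S₀) → S.card ≤ S₀.card)
    (hsh' : SnugShores G k r v' S' (insert v' S'))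
    (hvS' : v ∈ S') : S ⊂ S' := by
  obtain ⟨hS, hSi, hrS, hriS, hvS, -⟩ := hsh
  obtain ⟨hS', hS'i, hrS', hrS'i, hv'S', -⟩ := hsh'
  have hvr : v ≠ r := hv.1
  have hIeq : S' ∩ insert v S = insert v (S ∩ S') := by
    ext a
    simp only [Finset.mem_inter, Finset.mem_insert]
    constructor
    · rintro ⟨h1, rfl | h2⟩
      · exact Or.inl rfl
      · exact Or.inr ⟨h2, h1⟩
    · rintro (rfl | ⟨h1, h2⟩)
      · exact ⟨hvS', Or.inl rfl⟩
      · exact ⟨h2, Or.inr h1⟩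
  have hI : IsCut G k (S' ∩ insert v S) := by
    refine (uncross_inter_union hG hS' hSi ⟨v, Finset.mem_inter.mpr
      ⟨hvS', Finset.mem_insert_self v S⟩⟩ (notin_univ (r := r) ?_)).1
    simp only [Finset.mem_union, Finset.mem_insert]
    push_neg
    exact ⟨hrS', fun h => (hvr h.symm).elim, hrS⟩
  rcases (S ∩ S').eq_empty_or_nonempty with hem | hne
  · exfalso
    rw [hIeq, hem] at hI
    have : (cutEdges G {v}).card = k := by
      simpa using hI.2.2
    rw [cut_singleton] at this
    have := hv.2.1
    omega
  · have hSS' : IsCut G k (S ∩ S') := by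
      refine (uncross_inter_union hG hS hS' hne (notin_univ (r := r) ?_)).1
      simp [hrS, hrS']
    have hlower : SnugShores G k r v (S ∩ S') (insert v (S ∩ S')) := by
      refine ⟨hSS', hIeq ▸ hI, ?_, ?_, ?_, rfl⟩
      · simp only [Finset.mem_inter]
        exact fun h => hrS h.1
      · simp only [Finset.mem_insert, Finset.mem_inter]
        push_neg
        exact ⟨fun h => hvr h.symm, fun h _ => hrS h⟩
      · simp only [Finset.mem_inter]
        exact fun h => hvS h.1
    have hcard := hminS _ hlower
    have heq : S ∩ S' = S :=
      Finset.eq_of_subset_of_card_le Finset.inter_subset_left hcard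
    have hsub : S ⊆ S' := by
      rw [← heq]
      exact Finset.inter_subset_right
    exact lt_of_le_of_ne hsub (fun h => hvS (h ▸ hvS'))

lemma cross_contra (hG : EdgeConnected G k) {r v v' : V} {S S' : Finset V}
    (hv : Snug G k r v) (hv' : Snug G k r v') (hne : v ≠ v')
    (hsh : SnugShores G k r v S (insert v S))
    (hsh' : SnugShores G k r v' S' (insert v' S'))
    (hvS' : v ∉ S') (hv'S : v' ∉ S) (hnontriv : (S ∩ S').Nonempty)
    (hnoarc : ¬∃ (w : V) (T₁ T₂ S₁ S₂ : Finset V), Snug G k r w ∧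
      SnugShores G k r w T₁ T₂ ∧ SnugShores G k r v' S₁ S₂ ∧ T₂ = S₁) : False := by
  obtain ⟨hS, hSi, hrS, hriS, hvS, -⟩ := hsh
  obtain ⟨hS', hS'i, hrS', hrS'i, hv'S', -⟩ := hsh'
  have hvr : v ≠ r := hv.1
  have hv'r : v' ≠ r := hv'.1
  have hrU : r ∉ S ∪ S' := by simp [hrS, hrS']
  have hvU : v ∉ S ∪ S' := by simp [hvS, hvS']
  have hv'U : v' ∉ S ∪ S' := by simp [hv'S, hv'S']
  have hU : IsCut G k (S ∪ S') :=
    (uncross_inter_union hG hS hS' hnontriv (notin_univ hrU)).2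
  have e1 : (insert v S) ∩ S' = S ∩ S' := by
    ext a
    simp only [Finset.mem_inter, Finset.mem_insert]
    constructor
    · rintro ⟨rfl | h1, h2⟩
      · exact absurd h2 hvS'
      · exact ⟨h1, h2⟩
    · rintro ⟨h1, h2⟩
      exact ⟨Or.inr h1, h2⟩
  have hrvU : r ∉ insert v (S ∪ S') := by
    simp only [Finset.mem_insert]
    push_neg
    exact ⟨fun h => hvr h.symm, hrU⟩
  have hvUc : IsCut G k (insert v (S ∪ S')) := by
    have := (uncross_inter_union hG hSi hS' (by rwa [e1]) (notin_univ (r := r)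
      (by rwa [Finset.insert_union]))).2
    rwa [Finset.insert_union] at this
  have e2 : S ∩ (insert v' S') = S ∩ S' := by
    ext a
    simp only [Finset.mem_inter, Finset.mem_insert]
    constructor
    · rintro ⟨h1, rfl | h2⟩
      · exact absurd h1 hv'S
      · exact ⟨h1, h2⟩
    · rintro ⟨h1, h2⟩
      exact ⟨h1, Or.inr h2⟩
  have hrv'U : r ∉ insert v' (S ∪ S') := by
    simp only [Finset.mem_insert]
    push_neg
    exact ⟨fun h => hv'r h.symm, hrU⟩
  have hv'Uc : IsCut G k (insert v' (S ∪ S')) := by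
    have := (uncross_inter_union hG hS hS'i (by rwa [e2]) (notin_univ (r := r)
      (by rwa [Finset.union_insert]))).2
    rwa [Finset.union_insert] at this
  have e3 : (insert v (S ∪ S')) ∩ (insert v' (S ∪ S')) = S ∪ S' := by
    ext a
    simp only [Finset.mem_inter, Finset.mem_insert]
    constructor
    · rintro ⟨rfl | h1, h2⟩
      · rcases h2 with h2 | h2
        · exact absurd h2 hne
        · exact h2
      · exact h1
    · intro h
      exact ⟨Or.inr h, Or.inr h⟩
  have e4 : (insert v (S ∪ S')) ∪ (insert v' (S ∪ S')) =
      insert v (insert v' (S ∪ S')) := by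
    ext a
    simp only [Finset.mem_union, Finset.mem_insert]
    tauto
  have hrvv'U : r ∉ insert v (insert v' (S ∪ S')) := by
    simp only [Finset.mem_insert]
    push_neg
    exact ⟨fun h => hvr h.symm, fun h => hv'r h.symm, hrU⟩
  have hvv'U : IsCut G k (insert v (insert v' (S ∪ S'))) := by
    have h4 := (uncross_inter_union hG hvUc hv'Uc (by rw [e3]; exact hU.1)
      (notin_univ (r := r) (by rwa [e4]))).2
    rwa [e4] at h4
  have ecomm : insert v' (insert v (S ∪ S')) = insert v (insert v' (S ∪ S')) := by
    ext a
    simp only [Finset.mem_insert]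
    tauto
  have hshw : SnugShores G k r v (S ∪ S') (insert v (S ∪ S')) :=
    ⟨hU, hvUc, hrU, hrvU, hvU, rfl⟩
  have hshv' : SnugShores G k r v' (insert v (S ∪ S'))
      (insert v' (insert v (S ∪ S'))) := by
    refine ⟨hvUc, by rw [ecomm]; exact hvv'U, hrvU, by rw [ecomm]; exact hrvv'U, ?_, rfl⟩
    simp only [Finset.mem_insert]
    push_neg
    exact ⟨Ne.symm hne, hv'U⟩
  exact hnoarc ⟨v, S ∪ S', insert v (S ∪ S'), insert v (S ∪ S'),
    insert v' (insert v (S ∪ S')), hv, hshw, hshv', rfl⟩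

/-- The maximal members of a family of finsets. -/
def maxMembers (L : Finset (Finset V)) : Finset (Finset V) :=
  L.filter (fun S => ∀ T ∈ L, ¬ S ⊂ T)

lemma below_maximal (L : Finset (Finset V)) :
    ∀ S ∈ L, ∃ T ∈ maxMembers L, S ⊆ T := by
  intro S hS
  have hne : (L.filter (S ⊆ ·)).Nonempty := ⟨S, Finset.mem_filter.mpr ⟨hS, subset_rfl⟩⟩
  obtain ⟨T, hT, hTmax⟩ := Finset.exists_max_image _ Finset.card hne
  obtain ⟨hTL, hST⟩ := Finset.mem_filter.mp hT
  refine ⟨T, Finset.mem_filter.mpr ⟨hTL, fun T' hT' hc => ?_⟩, hST⟩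
  have h1 : T' ∈ L.filter (S ⊆ ·) :=
    Finset.mem_filter.mpr ⟨hT', hST.trans hc.1⟩
  have := hTmax T' h1
  exact absurd (Finset.card_lt_card hc) (by omega)

lemma maxMembers_nonempty {L : Finset (Finset V)} (h : L.Nonempty) :
    (maxMembers L).Nonempty := by
  obtain ⟨S, hS⟩ := h
  obtain ⟨T, hT, _⟩ := below_maximal L S hS
  exact ⟨T, hT⟩

lemma laminar_count (D : Finset V) :
    ∀ L : Finset (Finset V),
      (∀ S ∈ L, S.Nonempty) →
      (∀ S ∈ L, (S ∩ D).Nonempty) →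
      (∀ S ∈ L, ∀ T ∈ L, S ≠ T → S ∩ T = ∅ ∨ S ⊂ T ∨ T ⊂ S) →
      (∀ S ∈ L, ∀ T ∈ L, S ⊂ T → ((T \ S) ∩ D).Nonempty) →
      L.card + (maxMembers L).card ≤ 2 * ((L.sup id) ∩ D).card := by
  intro L
  induction L using Finset.strongInduction with
  | _ L ih =>
    intro hne hD hlam hgap
    rcases L.eq_empty_or_nonempty with rfl | hLne
    · simp [maxMembers]
    obtain ⟨M, hM, hMmax⟩ := Finset.exists_max_image L Finset.card hLne
    set In := (L.erase M).filter (· ⊆ M) with hIn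
    set Out := (L.erase M).filter (fun S => ¬ S ⊆ M) with hOut
    have hInL : In ⊆ L := (Finset.filter_subset _ _).trans (Finset.erase_subset _ _)
    have hOutL : Out ⊆ L := (Finset.filter_subset _ _).trans (Finset.erase_subset _ _)
    have hInM : ∀ S ∈ In, S ⊂ M := by
      intro S hS
      obtain ⟨hS1, hS2⟩ := Finset.mem_filter.mp hS
      exact lt_of_le_of_ne hS2 (Finset.ne_of_mem_erase hS1)
    have hOutM : ∀ S ∈ Out, S ∩ M = ∅ := by
      intro S hS
      obtain ⟨hS1, hS2⟩ := Finset.mem_filter.mp hS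
      have hSL : S ∈ L := Finset.erase_subset _ _ hS1
      rcases hlam S hSL M hM (Finset.ne_of_mem_erase hS1) with h | h | h
      · exact h
      · exact absurd h.1 hS2
      · exact absurd (Finset.card_lt_card h) (by have := hMmax S hSL; omega)
    have hMnotInOut : M ∉ In ∧ M ∉ Out :=
      ⟨fun h => (Finset.mem_erase.mp (Finset.mem_filter.mp h).1).1 rfl,
       fun h => (Finset.mem_erase.mp (Finset.mem_filter.mp h).1).1 rfl⟩
    have hcards : L.card = 1 + In.card + Out.card := by
      have h1 : In ∪ Out = L.erase M := Finset.filter_union_filter_not_eq _ _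
      have h2 : Disjoint In Out := Finset.disjoint_filter_filter_not _ _ _
      have h3 := Finset.card_union_of_disjoint h2
      rw [h1] at h3
      have h4 := Finset.card_erase_add_one hM
      omega
    -- maximal members split
    have hmax : maxMembers L = insert M (maxMembers Out) := by
      ext S
      simp only [maxMembers, Finset.mem_filter, Finset.mem_insert]
      constructor
      · rintro ⟨hSL, hSmax⟩
        by_cases hSM : S = M
        · exact Or.inl hSM
        have hSe : S ∈ L.erase M := Finset.mem_erase.mpr ⟨hSM, hSL⟩
        by_cases hSsub : S ⊆ M
        · exact absurd (hSmax M hM) (by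
            simp only [not_not]
            exact lt_of_le_of_ne hSsub hSM)
        · refine Or.inr ⟨Finset.mem_filter.mpr ⟨hSe, hSsub⟩, fun T hT => hSmax T (hOutL hT)⟩
      · rintro (rfl | ⟨hSO, hSmax⟩)
        · refine ⟨hM, fun T hT hc => ?_⟩
          exact absurd (Finset.card_lt_card hc) (by have := hMmax T hT; omega)
        · refine ⟨hOutL hSO, fun T hT hc => ?_⟩
          by_cases hTM : T = M
          · subst hTM
            have h0 := hOutM S hSO
            obtain ⟨a, ha⟩ := hne S (hOutL hSO)
            have : a ∈ S ∩ T := Finset.mem_inter.mpr ⟨ha, hc.1 ha⟩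
            rw [h0] at this
            exact absurd this (Finset.notMem_empty a)
          have hTe : T ∈ L.erase M := Finset.mem_erase.mpr ⟨hTM, hT⟩
          by_cases hTsub : T ⊆ M
          · have h0 := hOutM S hSO
            obtain ⟨a, ha⟩ := hne S (hOutL hSO)
            have : a ∈ S ∩ M := Finset.mem_inter.mpr ⟨ha, hTsub (hc.1 ha)⟩
            rw [h0] at this
            exact absurd this (Finset.notMem_empty a)
          · exact hSmax T (Finset.mem_filter.mpr ⟨hTe, hTsub⟩) hc
    have hMnotmaxOut : M ∉ maxMembers Out :=
      fun h => hMnotInOut.2 (Finset.filter_subset _ _ h)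
    have hmaxcard : (maxMembers L).card = 1 + (maxMembers Out).card := by
      rw [hmax, Finset.card_insert_of_notMem hMnotmaxOut]
      omega
    -- disjointness of the two D-parts
    have hdisjD : Disjoint (M ∩ D) ((Out.sup id) ∩ D) := by
      rw [Finset.disjoint_left]
      intro a ha hb
      obtain ⟨S, hS, haS⟩ := Finset.mem_sup.mp (Finset.mem_inter.mp hb).1
      have : a ∈ S ∩ M := Finset.mem_inter.mpr ⟨haS, (Finset.mem_inter.mp ha).1⟩
      rw [hOutM S hS] at this
      exact absurd this (Finset.notMem_empty a)
    have hsubD : (M ∩ D) ∪ ((Out.sup id) ∩ D) ⊆ (L.sup id) ∩ D := by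
      apply Finset.union_subset
      · exact Finset.inter_subset_inter (Finset.le_sup (f := id) hM) subset_rfl
      · exact Finset.inter_subset_inter (Finset.sup_mono hOutL) subset_rfl
    have hDsum : (M ∩ D).card + ((Out.sup id) ∩ D).card ≤ ((L.sup id) ∩ D).card := by
      rw [← Finset.card_union_of_disjoint hdisjD]
      exact Finset.card_le_card hsubD
    -- induction on Out
    have hOutssub : Out ⊂ L :=
      Finset.ssubset_iff_of_subset hOutL |>.mpr ⟨M, hM, hMnotInOut.2⟩
    have hOutIH := ih Out hOutssub (fun S hS => hne S (hOutL hS))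
      (fun S hS => hD S (hOutL hS))
      (fun S hS T hT => hlam S (hOutL hS) T (hOutL hT))
      (fun S hS T hT => hgap S (hOutL hS) T (hOutL hT))
    -- the In-side bound
    have hInbound : In.card + 2 ≤ 2 * (M ∩ D).card := by
      rcases In.eq_empty_or_nonempty with hIne | hInne
      · have := Finset.card_pos.mpr (hD M hM)
        rw [hIne]
        simp only [Finset.card_empty]
        omega
      · have hInssub : In ⊂ L :=
          Finset.ssubset_iff_of_subset hInL |>.mpr ⟨M, hM, hMnotInOut.1⟩
        have hInIH := ih In hInssub (fun S hS => hne S (hInL hS))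
          (fun S hS => hD S (hInL hS))
          (fun S hS T hT => hlam S (hInL hS) T (hInL hT))
          (fun S hS T hT => hgap S (hInL hS) T (hInL hT))
        have hInsupM : In.sup id ⊆ M := Finset.sup_le fun S hS => (hInM S hS).1
        have hIcard : ((In.sup id) ∩ D).card ≤ (M ∩ D).card :=
          Finset.card_le_card (Finset.inter_subset_inter hInsupM subset_rfl)
        have hmInpos : 1 ≤ (maxMembers In).card :=
          Finset.card_pos.mpr (maxMembers_nonempty hInne)
        rcases Nat.lt_or_ge (maxMembers In).card 2 with hm | hm
        · -- exactly one maximal member C of In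
          have h1 : (maxMembers In).card = 1 := by omega
          obtain ⟨C, hC⟩ := Finset.card_eq_one.mp h1
          have hCIn : C ∈ In := Finset.filter_subset _ _ (hC ▸ Finset.mem_singleton_self C)
          have hsupC : In.sup id ⊆ C := Finset.sup_le fun S hS => by
            obtain ⟨T, hT, hST⟩ := below_maximal In S hS
            rw [hC, Finset.mem_singleton] at hT
            exact hT ▸ hST
          have hCM : C ⊂ M := hInM C hCIn
          have hgapCM := hgap C (hInL hCIn) M hM hCM
          have hdisj2 : Disjoint (C ∩ D) ((M \ C) ∩ D) := by
            rw [Finset.disjoint_left]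
            intro a ha hb
            exact (Finset.mem_sdiff.mp (Finset.mem_inter.mp hb).1).2
              (Finset.mem_inter.mp ha).1
          have hsub2 : (C ∩ D) ∪ ((M \ C) ∩ D) ⊆ M ∩ D := by
            apply Finset.union_subset
            · exact Finset.inter_subset_inter hCM.1 subset_rfl
            · exact Finset.inter_subset_inter (Finset.sdiff_subset) subset_rfl
          have h2 : (C ∩ D).card + ((M \ C) ∩ D).card ≤ (M ∩ D).card := by
            rw [← Finset.card_union_of_disjoint hdisj2]
            exact Finset.card_le_card hsub2
          have h3 := Finset.card_pos.mpr hgapCM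
          have h4 : ((In.sup id) ∩ D).card ≤ (C ∩ D).card :=
            Finset.card_le_card (Finset.inter_subset_inter hsupC subset_rfl)
          omega
        · omega
    omega

end AuxLemmas

/-- The number of snug paths, i.e. of snug vertices with no incoming arc in the
chain graph, is less than twice the number of vertices of degree `k`. -/
theorem num_snug_paths_lt
    (k : ℕ) (hk : 1 ≤ k) (hV : 2 ≤ Fintype.card V)
    (G : SimpleGraph V) [DecidableRel G.Adj] (hG : EdgeConnected G k)
    (hmin : ∀ e ∈ G.edgeSet, ∃ S : Finset V, IsCut G k S ∧ Crosses S e)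
    (r : V) :
    {v : V | Snug G k r v ∧
        ¬ ∃ (w : V) (T₁ T₂ S₁ S₂ : Finset V), Snug G k r w ∧
          SnugShores G k r w T₁ T₂ ∧ SnugShores G k r v S₁ S₂ ∧ T₂ = S₁}.ncard
      < 2 * {v : V | G.degree v = k}.ncard := by
  classical
  have hcn : ∀ (p : V → Prop), {v : V | p v}.ncard = (Finset.univ.filter p).card := by
    intro p
    have h : {v : V | p v} = ↑(Finset.univ.filter p) := by ext x; simp
    rw [h, Set.ncard_coe_finset]
  set Pd : V → Prop := fun v => Snug G k r v ∧
      ¬ ∃ (w : V) (T₁ T₂ S₁ S₂ : Finset V), Snug G k r w ∧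
        SnugShores G k r w T₁ T₂ ∧ SnugShores G k r v S₁ S₂ ∧ T₂ = S₁ with hPd
  set D := Finset.univ.filter (fun v => G.degree v = k) with hDdef
  set P := Finset.univ.filter Pd with hPdef
  have hDne : D.Nonempty := by
    have hne : Nonempty V := Fintype.card_pos_iff.mp (by omega)
    obtain ⟨v₀⟩ := hne
    have h1 : 1 ≤ (cutEdges G {v₀}).card :=
      le_trans hk (hG _ (Finset.singleton_nonempty v₀) (singleton_ne_univ hV v₀))
    obtain ⟨e, he⟩ := Finset.card_pos.mp (show 0 < (cutEdges G {v₀}).card by omega)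
    simp only [cutEdges, Finset.mem_filter] at he
    obtain ⟨S, hS, -⟩ := hmin e (SimpleGraph.mem_edgeFinset.mp he.1)
    obtain ⟨x, hx, hxk⟩ := exists_degree_k hG hk hV hmin S hS
    exact ⟨x, Finset.mem_filter.mpr ⟨Finset.mem_univ x, hxk⟩⟩
  -- choose minimum-cardinality lower shores
  have hch : ∀ v : V, ∃ S : Finset V, Pd v →
      (SnugShores G k r v S (insert v S) ∧
        ∀ S₀, SnugShores G k r v S₀ (insert v S₀) → S.card ≤ S₀.card) := by
    intro v
    by_cases hv : Pd v
    · obtain ⟨-, -, S₁, S₂, hsh⟩ := hv.1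
      have hls := lower_of_shores hsh
      obtain ⟨S, hS, hSmin⟩ := Finset.exists_min_image
        ((Finset.univ : Finset (Finset V)).filter
          (fun S₀ => SnugShores G k r v S₀ (insert v S₀)))
        Finset.card ⟨S₁, Finset.mem_filter.mpr ⟨Finset.mem_univ _, hls⟩⟩
      exact ⟨S, fun _ => ⟨(Finset.mem_filter.mp hS).2,
        fun S₀ h₀ => hSmin S₀ (Finset.mem_filter.mpr ⟨Finset.mem_univ _, h₀⟩)⟩⟩
    · exact ⟨∅, fun h => absurd h hv⟩
  choose f hf using hch
  have hmem : ∀ v ∈ P, Pd v := fun v hv => (Finset.mem_filter.mp hv).2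
  have hsnug : ∀ v ∈ P, Snug G k r v := fun v hv => (hmem v hv).1
  have hfsh : ∀ v ∈ P, SnugShores G k r v (f v) (insert v (f v)) :=
    fun v hv => (hf v (hmem v hv)).1
  have hfmin : ∀ v ∈ P, ∀ S₀, SnugShores G k r v S₀ (insert v S₀) →
      (f v).card ≤ S₀.card := fun v hv => (hf v (hmem v hv)).2
  set L := P.image f with hLdef
  have hinj : Set.InjOn f ↑P := by
    intro v hv v' hv' heq
    by_contra hne
    have hvP : v ∈ P := Finset.mem_coe.mp hv
    have hv'P : v' ∈ P := Finset.mem_coe.mp hv'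
    have h2 : SnugShores G k r v' (f v) (insert v' (f v)) := by
      rw [heq]; exact hfsh v' hv'P
    exact cross_contra hG (hsnug v hvP) (hsnug v' hv'P) hne (hfsh v hvP) h2
      ((hfsh v hvP).2.2.2.2.1) (h2.2.2.2.2.1)
      (by rw [Finset.inter_self]; exact (hfsh v hvP).1.1)
      (hmem v' hv'P).2
  have hcardL : L.card = P.card := Finset.card_image_of_injOn hinj
  have howner : ∀ S ∈ L, ∃ v ∈ P, f v = S := fun S hS => Finset.mem_image.mp hS
  have hLnonempty : ∀ S ∈ L, S.Nonempty := by
    intro S hS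
    obtain ⟨v, hvP, rfl⟩ := howner S hS
    exact (hfsh v hvP).1.1
  have hLD : ∀ S ∈ L, (S ∩ D).Nonempty := by
    intro S hS
    obtain ⟨v, hvP, rfl⟩ := howner S hS
    obtain ⟨x, hx, hxk⟩ := exists_degree_k hG hk hV hmin _ (hfsh v hvP).1
    exact ⟨x, Finset.mem_inter.mpr ⟨hx,
      Finset.mem_filter.mpr ⟨Finset.mem_univ x, hxk⟩⟩⟩
  have hLlam : ∀ S ∈ L, ∀ T ∈ L, S ≠ T → S ∩ T = ∅ ∨ S ⊂ T ∨ T ⊂ S := by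
    intro S hS T hT hST
    obtain ⟨v, hvP, rfl⟩ := howner S hS
    obtain ⟨v', hv'P, rfl⟩ := howner T hT
    have hvv' : v ≠ v' := fun h => hST (h ▸ rfl)
    by_contra hcon
    push_neg at hcon
    obtain ⟨h1, h2, h3⟩ := hcon
    have hne' : (f v ∩ f v').Nonempty := h1
    by_cases hc1 : v ∈ f v'
    · exact h2 (nesting hG (hsnug v hvP) (hfsh v hvP) (hfmin v hvP)
        (hfsh v' hv'P) hc1)
    by_cases hc2 : v' ∈ f v
    · exact h3 (nesting hG (hsnug v' hv'P) (hfsh v' hv'P) (hfmin v' hv'P)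
        (hfsh v hvP) hc2)
    · exact cross_contra hG (hsnug v hvP) (hsnug v' hv'P) hvv' (hfsh v hvP)
        (hfsh v' hv'P) hc1 hc2 hne' (hmem v' hv'P).2
  have hLgap : ∀ S ∈ L, ∀ T ∈ L, S ⊂ T → ((T \ S) ∩ D).Nonempty := by
    intro S hS T hT hSsubT
    obtain ⟨v, hvP, rfl⟩ := howner S hS
    obtain ⟨v', hv'P, rfl⟩ := howner T hT
    have hvv' : v ≠ v' := by
      intro h
      rw [h] at hSsubT
      exact lt_irrefl _ hSsubT
    have hvT : v ∈ f v' := by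
      by_contra hc1
      by_cases hc2 : v' ∈ f v
      · have := nesting hG (hsnug v' hv'P) (hfsh v' hv'P) (hfmin v' hv'P)
          (hfsh v hvP) hc2
        exact lt_asymm hSsubT this
      · exact cross_contra hG (hsnug v hvP) (hsnug v' hv'P) hvv' (hfsh v hvP)
          (hfsh v' hv'P) hc1 hc2
          (by rw [Finset.inter_eq_left.mpr hSsubT.1]; exact (hfsh v hvP).1.1)
          (hmem v' hv'P).2
    have hBcut : IsCut G k (insert v (f v)) := (hfsh v hvP).2.1
    have hBsub : insert v (f v) ⊆ f v' :=
      Finset.insert_subset_iff.mpr ⟨hvT, hSsubT.1⟩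
    have hT'cut : IsCut G k (f v') := (hfsh v' hv'P).1
    have hrT' : r ∉ f v' := (hfsh v' hv'P).2.2.1
    by_cases hBeq : insert v (f v) = f v'
    · exact absurd ⟨v, f v, insert v (f v), f v', insert v' (f v'),
        hsnug v hvP, hfsh v hvP, hfsh v' hv'P, hBeq⟩ (hmem v' hv'P).2
    · have hBss : insert v (f v) ⊂ f v' := lt_of_le_of_ne hBsub hBeq
      rcases gap_lemma hG hk hV hmin hT'cut hrT' _ _ rfl hBcut hBss with
        ⟨x, hx, hxk⟩ | ⟨w, hw, hw1, hw2⟩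
      · obtain ⟨hx1, hx2⟩ := Finset.mem_sdiff.mp hx
        refine ⟨x, Finset.mem_inter.mpr ⟨?_,
          Finset.mem_filter.mpr ⟨Finset.mem_univ _, hxk⟩⟩⟩
        exact Finset.mem_sdiff.mpr ⟨hx1, fun hc => hx2 (Finset.mem_insert_of_mem hc)⟩
      · exfalso
        obtain ⟨hw1', hw2'⟩ := Finset.mem_sdiff.mp hw
        have hwr : w ≠ r := fun h => hrT' (h ▸ hw1')
        have heqT : f v' = insert w (f v' \ {w}) := by
          rw [Finset.sdiff_singleton_eq_erase, Finset.insert_erase hw1']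
        have hshw : SnugShores G k r w (f v' \ {w}) (f v') := by
          refine ⟨hw2, hT'cut, ?_, hrT', ?_, heqT⟩
          · simp only [Finset.mem_sdiff]
            exact fun h => hrT' h.1
          · simp
        have hsnugw : Snug G k r w := ⟨hwr, hw1, _, _, hshw⟩
        exact (hmem v' hv'P).2 ⟨w, f v' \ {w}, f v', f v', insert v' (f v'),
          hsnugw, hshw, hfsh v' hv'P, rfl⟩
  have hcount := laminar_count D L hLnonempty hLD hLlam hLgap
  have key : P.card < 2 * D.card := by
    rcases P.eq_empty_or_nonempty with hPe | hPne
    · have := Finset.card_pos.mpr hDne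
      rw [hPe]
      simp only [Finset.card_empty]
      omega
    · have hLne : L.Nonempty := hPne.image f
      have hmax1 : 1 ≤ (maxMembers L).card :=
        Finset.card_pos.mpr (maxMembers_nonempty hLne)
      have hsupD : ((L.sup id) ∩ D).card ≤ D.card :=
        Finset.card_le_card Finset.inter_subset_right
      omega
  show {v : V | Pd v}.ncard < 2 * {v : V | G.degree v = k}.ncard
  have e1 : {v : V | Pd v}.ncard = P.card := by
    have h : {v : V | Pd v} = ↑P := by
      ext x
      simp [hPdef]
    rw [h, Set.ncard_coe_finset]
  have e2 : {v : V | G.degree v = k}.ncard = D.card := by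
    have h : {v : V | G.degree v = k} = ↑D := by
      ext x
      simp [hDdef]
    rw [h, Set.ncard_coe_finset]
  rw [e1, e2]
  exact key
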